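/- Let p ≥ 2 be a real number and set C₁ = (p−1)(p³−3p²+5p−2)/p³ and C₂ = 2(p−1)(p²−2p+2)/p². Then p³−3p²+5p−2 > 0, and for every t ∈ [−1,1] and all real numbers a, b one has C₁ a² − C₂ t a b + (1/p + (p−2)t²) b² ≥ ((p−1)(p−2)/(p(p³−3p²+5p−2))) b². In particular, for every t ∈ [−1,1], 4 C₁ (1/p + (p−2)t²) − C₂² t² ≥ 4(p−1)²(p−2)/p⁴. -/

import Mathlib

/-- Quadratic form lower bound from the discriminant condition. -/
lemma quad_lower (c1 c2 e m a b : ℝ) (hc1 : 0 < c1)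
    (h : 4 * c1 * e - c2 ^ 2 ≥ 4 * c1 * m) :
    c1 * a ^ 2 - c2 * a * b + e * b ^ 2 ≥ m * b ^ 2 := by
  nlinarith [sq_nonneg (2 * c1 * a - c2 * b), sq_nonneg b,
    mul_nonneg (sub_nonneg.2 h) (sq_nonneg b), hc1.le]

/-- Algebraic core of the convexity lemma for `w ↦ ∫ |∇ w^{1/p}|^p`: for `p ≥ 2`, with
`C₁ = (p−1)(p³−3p²+5p−2)/p³` and `C₂ = 2(p−1)(p²−2p+2)/p²`, one has `p³−3p²+5p−2 > 0`,
the quadratic form `C₁ a² − C₂ t a b + (1/p + (p−2)t²) b²` is bounded below by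
`((p−1)(p−2)/(p(p³−3p²+5p−2))) b²` for `t ∈ [−1,1]`, and in particular
`4C₁(1/p + (p−2)t²) − C₂² t² ≥ 4(p−1)²(p−2)/p⁴`. -/
theorem convexity_quadratic_form (p : ℝ) (hp : 2 ≤ p) :
    0 < p ^ 3 - 3 * p ^ 2 + 5 * p - 2 ∧
    (∀ t ∈ Set.Icc (-1 : ℝ) 1, ∀ a b : ℝ,
      ((p - 1) * (p ^ 3 - 3 * p ^ 2 + 5 * p - 2) / p ^ 3) * a ^ 2
        - (2 * (p - 1) * (p ^ 2 - 2 * p + 2) / p ^ 2) * t * a * b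
        + (1 / p + (p - 2) * t ^ 2) * b ^ 2
      ≥ ((p - 1) * (p - 2) / (p * (p ^ 3 - 3 * p ^ 2 + 5 * p - 2))) * b ^ 2) ∧
    (∀ t ∈ Set.Icc (-1 : ℝ) 1,
      4 * ((p - 1) * (p ^ 3 - 3 * p ^ 2 + 5 * p - 2) / p ^ 3) * (1 / p + (p - 2) * t ^ 2)
        - (2 * (p - 1) * (p ^ 2 - 2 * p + 2) / p ^ 2) ^ 2 * t ^ 2
      ≥ 4 * (p - 1) ^ 2 * (p - 2) / p ^ 4) := by
  have hp0 : (0 : ℝ) < p := by linarith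
  have hQ : 0 < p ^ 3 - 3 * p ^ 2 + 5 * p - 2 := by
    nlinarith [mul_nonneg (by linarith : (0:ℝ) ≤ p - 2) (sq_nonneg (p - 1)), sq_nonneg p]
  have hp4 : (0 : ℝ) < p ^ 4 := by positivity
  -- the discriminant inequality (third part)
  have key : ∀ t ∈ Set.Icc (-1 : ℝ) 1,
      4 * ((p - 1) * (p ^ 3 - 3 * p ^ 2 + 5 * p - 2) / p ^ 3) * (1 / p + (p - 2) * t ^ 2)
        - (2 * (p - 1) * (p ^ 2 - 2 * p + 2) / p ^ 2) ^ 2 * t ^ 2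
      ≥ 4 * (p - 1) ^ 2 * (p - 2) / p ^ 4 := by
    intro t ht
    obtain ⟨ht1, ht2⟩ := ht
    have ht' : t ^ 2 ≤ 1 := by nlinarith
    rw [ge_iff_le, ← sub_nonneg]
    have heq : 4 * ((p - 1) * (p ^ 3 - 3 * p ^ 2 + 5 * p - 2) / p ^ 3)
          * (1 / p + (p - 2) * t ^ 2)
        - (2 * (p - 1) * (p ^ 2 - 2 * p + 2) / p ^ 2) ^ 2 * t ^ 2
        - 4 * (p - 1) ^ 2 * (p - 2) / p ^ 4
        = 4 * (p - 1) * (1 - t ^ 2) * (p ^ 3 - 4 * p ^ 2 + 8 * p - 4) / p ^ 4 := by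
      field_simp
      ring
    rw [heq]
    apply div_nonneg _ hp4.le
    have h1 : (0 : ℝ) ≤ p ^ 3 - 4 * p ^ 2 + 8 * p - 4 := by
      nlinarith [mul_nonneg (by linarith : (0:ℝ) ≤ p - 2) (sq_nonneg (p - 1)), sq_nonneg (p - 2)]
    have h2 : (0 : ℝ) ≤ 1 - t ^ 2 := by linarith
    have h3 : (0 : ℝ) ≤ p - 1 := by linarith
    positivity
  refine ⟨hQ, ?_, key⟩
  intro t ht a b
  have hc1 : 0 < (p - 1) * (p ^ 3 - 3 * p ^ 2 + 5 * p - 2) / p ^ 3 := by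
    apply div_pos _ (by positivity)
    exact mul_pos (by linarith) hQ
  have hm : 4 * ((p - 1) * (p ^ 3 - 3 * p ^ 2 + 5 * p - 2) / p ^ 3)
      * ((p - 1) * (p - 2) / (p * (p ^ 3 - 3 * p ^ 2 + 5 * p - 2)))
      = 4 * (p - 1) ^ 2 * (p - 2) / p ^ 4 := by
    field_simp
    rw [div_eq_iff (ne_of_gt (by linarith))]
    ring
  have hkey := key t ht
  have hdisc : 4 * ((p - 1) * (p ^ 3 - 3 * p ^ 2 + 5 * p - 2) / p ^ 3)
        * (1 / p + (p - 2) * t ^ 2)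
      - ((2 * (p - 1) * (p ^ 2 - 2 * p + 2) / p ^ 2) * t) ^ 2
      ≥ 4 * ((p - 1) * (p ^ 3 - 3 * p ^ 2 + 5 * p - 2) / p ^ 3)
        * ((p - 1) * (p - 2) / (p * (p ^ 3 - 3 * p ^ 2 + 5 * p - 2))) := by
    rw [hm, mul_pow]
    exact hkey
  have := quad_lower ((p - 1) * (p ^ 3 - 3 * p ^ 2 + 5 * p - 2) / p ^ 3)
    ((2 * (p - 1) * (p ^ 2 - 2 * p + 2) / p ^ 2) * t)
    (1 / p + (p - 2) * t ^ 2)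
    ((p - 1) * (p - 2) / (p * (p ^ 3 - 3 * p ^ 2 + 5 * p - 2))) a b hc1 hdisc
  linarith [this]
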